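/- arXiv:1910.13898 — 2 statements merged into one kernel-verified Lean document; each statement's English description precedes it below -/
import Mathlib

section
/- Every Stein manifold X, i.e. a complex manifold admitting a proper holomorphic embedding as a closed complex submanifold of some ℂ^N, is 1-Hartogs: every holomorphic map from the Hartogs figure H₁¹(r) to X extends to a holomorphic map from Δ² to X. (It suffices to assume the Hartogs extension theorem for scalar holomorphic functions on H₁¹(r) and that X is a closed submanifold of ℂ^N.) -/
open Metric

/-- The 1-concave Hartogs figure `H₁¹(r) = (Δ × Δ(r)) ∪ (A_{1-r,1} × Δ) ⊂ ℂ²`. -/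
def hartogsFig (r : ℝ) : Set (ℂ × ℂ) :=
  (ball (0 : ℂ) 1 ×ˢ ball (0 : ℂ) r) ∪
    ((ball (0 : ℂ) 1 \ closure (ball (0 : ℂ) (1 - r))) ×ˢ ball (0 : ℂ) 1)

/-- The open unit bidisc `Δ² ⊂ ℂ²`. -/
def bidisc : Set (ℂ × ℂ) := ball (0 : ℂ) 1 ×ˢ ball (0 : ℂ) 1

/-- Every Stein manifold is 1-Hartogs.  Here the Stein manifold `X` is realized as a
closed complex submanifold of `ℂ^N`, globally cut out by a family `G` of entire
functions, and we assume the classical Hartogs extension theorem for scalar holomorphic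
functions on `H₁¹(r)`.  Then every holomorphic map `f : H₁¹(r) → X ⊂ ℂ^N` extends to a
holomorphic map `F : Δ² → X`. -/
theorem stein_is_one_hartogs (r : ℝ) (hr0 : 0 < r) (hr1 : r < 1) (N : ℕ)
    (X : Set (Fin N → ℂ)) (G : Set ((Fin N → ℂ) → ℂ))
    (hG : ∀ g ∈ G, Differentiable ℂ g) (hXG : X = {z | ∀ g ∈ G, g z = 0})
    (hXclosed : IsClosed X)
    (hHartogs : ∀ g : ℂ × ℂ → ℂ, DifferentiableOn ℂ g (hartogsFig r) →
      ∃ g' : ℂ × ℂ → ℂ, DifferentiableOn ℂ g' bidisc ∧ Set.EqOn g' g (hartogsFig r))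
    (f : ℂ × ℂ → Fin N → ℂ) (hf : DifferentiableOn ℂ f (hartogsFig r))
    (hfX : ∀ z ∈ hartogsFig r, f z ∈ X) :
    ∃ F : ℂ × ℂ → Fin N → ℂ, DifferentiableOn ℂ F bidisc ∧
      Set.EqOn F f (hartogsFig r) ∧ ∀ z ∈ bidisc, F z ∈ X := by
  -- Extend each coordinate function
  have hcoord : ∀ i : Fin N, ∃ g' : ℂ × ℂ → ℂ, DifferentiableOn ℂ g' bidisc ∧
      Set.EqOn g' (fun z => f z i) (hartogsFig r) := by
    intro i
    exact hHartogs _ ((differentiableOn_pi.1 hf) i)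
  choose Fi hFi hFieq using hcoord
  refine ⟨fun z i => Fi i z, ?_, ?_, ?_⟩
  · exact differentiableOn_pi.2 hFi
  · intro z hz
    funext i
    exact hFieq i hz
  · -- membership in X via identity theorem
    have hHopen : IsOpen (hartogsFig r) := by
      apply IsOpen.union
      · exact isOpen_ball.prod isOpen_ball
      · exact (isOpen_ball.sdiff isClosed_closure).prod isOpen_ball
    have hBopen : IsOpen bidisc := isOpen_ball.prod isOpen_ball
    have hsub : hartogsFig r ⊆ bidisc := by
      rintro ⟨z, w⟩ (⟨hz, hw⟩ | ⟨hz, hw⟩)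
      · exact ⟨hz, lt_trans hw hr1⟩
      · exact ⟨hz.1, hw⟩
    have hz0 : ((0 : ℂ), (0 : ℂ)) ∈ hartogsFig r :=
      Or.inl ⟨by simp, by simpa using hr0⟩
    have hconn : IsPreconnected bidisc :=
      ((convex_ball (0:ℂ) 1).prod (convex_ball (0:ℂ) 1)).isPreconnected
    intro z hz
    rw [hXG]
    intro g hg
    set h : ℂ × ℂ → ℂ := fun w => g (fun i => Fi i w) with hh
    have hhd : DifferentiableOn ℂ h bidisc :=
      (hG g hg).comp_differentiableOn (differentiableOn_pi.2 hFi)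
    have hvanish : ∀ w ∈ hartogsFig r, h w = 0 := by
      intro w hw
      have : (fun i => Fi i w) = f w := funext fun i => hFieq i hw
      simp only [hh, this]
      have := hfX w hw
      rw [hXG] at this
      exact this g hg
    -- slice argument in the first variable
    obtain ⟨z, w⟩ := z
    obtain ⟨hz1, hw1⟩ := hz
    set φ : ℂ → ℂ := fun u => h (u, w) with hφ
    have hφd : DifferentiableOn ℂ φ (ball (0:ℂ) 1) := by
      apply hhd.comp (f := fun u : ℂ => (u, w))
      · exact (differentiable_id.prodMk (differentiable_const w)).differentiableOn
      · intro u hu; exact ⟨hu, hw1⟩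
    have hφa : AnalyticOnNhd ℂ φ (ball (0:ℂ) 1) := hφd.analyticOnNhd isOpen_ball
    have hAopen : IsOpen (ball (0:ℂ) 1 \ closure (ball (0:ℂ) (1 - r))) :=
      isOpen_ball.sdiff isClosed_closure
    set z₁ : ℂ := ((1 - r/2 : ℝ) : ℂ) with hz₁def
    have habs : ‖z₁‖ = 1 - r/2 := by
      rw [hz₁def, Complex.norm_real, Real.norm_eq_abs, abs_of_pos]; linarith
    have hz₁A : z₁ ∈ ball (0:ℂ) 1 \ closure (ball (0:ℂ) (1 - r)) := by
      constructor
      · rw [mem_ball_zero_iff, habs]; linarith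
      · rw [closure_ball (0:ℂ) (by intro h0; linarith [h0] : (1:ℝ) - r ≠ 0)]
        rw [mem_closedBall_zero_iff, habs]
        push_neg; linarith
    have hφ0 : ∀ u ∈ ball (0:ℂ) 1 \ closure (ball (0:ℂ) (1 - r)), φ u = 0 := by
      intro u hu
      exact hvanish (u, w) (Or.inr ⟨hu, hw1⟩)
    have hev : φ =ᶠ[nhds z₁] 0 :=
      Filter.eventuallyEq_of_mem (hAopen.mem_nhds hz₁A) hφ0
    have := hφa.eqOn_zero_of_preconnected_of_eventuallyEq_zero
      (convex_ball (0:ℂ) 1).isPreconnected hz₁A.1 hev hz1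
    exact this
end

section
/- The Riemann sphere ℙ¹ is not 1-Hartogs: the holomorphic map H₁¹(r) → ℙ¹ given by (z₁,z₂) ↦ [z₁ - a : z₂ - b] for a suitable point (a,b) ∈ Δ² \ H₁¹(r) (e.g. a = b = 0 after translating the figure so that 0 ∉ H₁¹(r), or equivalently (z₁,z₂) ↦ [z₁ : z₂ - 1/2] with 1/2 chosen so that (0,1/2) ∉ H₁¹(r)) does not extend to a holomorphic map Δ² → ℙ¹. -/
open Metric

lemma norm_ofReal' (s : ℝ) : ‖(s : ℂ)‖ = |s| := by
  rw [Complex.norm_real, Real.norm_eq_abs]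

lemma norm_half : ‖(1/2 : ℂ)‖ = 1/2 := by
  rw [show (1/2 : ℂ) = ((1/2 : ℝ) : ℂ) by norm_num, norm_ofReal']
  norm_num

lemma single_ne (i : Fin 2) : (Pi.single i (1:ℂ) : Fin 2 → ℂ) ≠ 0 := by
  intro h
  have := congrFun h i
  simp at this

lemma mk_eq_single_iff {v : Fin 2 → ℂ} (hv : v ≠ 0) {i j : Fin 2} (hij : j ≠ i) :
    Projectivization.mk ℂ v hv = Projectivization.mk ℂ (Pi.single i 1) (single_ne i) ↔
      v j = 0 := by
  rw [Projectivization.mk_eq_mk_iff]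
  constructor
  · rintro ⟨a, ha⟩
    have := congrFun ha j
    simp only [Pi.smul_apply, Pi.single_apply, if_neg hij, smul_zero] at this
    exact this.symm
  · intro hvj
    have hvi : v i ≠ 0 := by
      intro hvi
      apply hv
      funext k
      have hk : k = i ∨ k = j := by fin_cases i <;> fin_cases j <;> fin_cases k <;> simp_all
      rcases hk with rfl | rfl
      · simpa using hvi
      · simpa using hvj
    refine ⟨Units.mk0 (v i) hvi, ?_⟩
    funext k
    have hk : k = i ∨ k = j := by fin_cases i <;> fin_cases j <;> fin_cases k <;> simp_all
    rcases hk with rfl | rfl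
    · simp
    · simp [Pi.single_apply, if_neg hij, hvj]

lemma key (F : ℂ × ℂ → Projectivization ℂ (Fin 2 → ℂ))
    (hF : ∀ p ∈ bidisc, ∃ U : Set (ℂ × ℂ), IsOpen U ∧ p ∈ U ∧
        ∃ G : ℂ × ℂ → Fin 2 → ℂ, DifferentiableOn ℂ G (U ∩ bidisc) ∧
          ∀ z ∈ U ∩ bidisc, ∃ h : G z ≠ 0, F z = Projectivization.mk ℂ (G z) h)
    (γ : ℂ → ℂ × ℂ) (hγ : Differentiable ℂ γ)
    (hmap : ∀ w ∈ ball (0:ℂ) 1, γ w ∈ bidisc)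
    (i j : Fin 2) (hij : j ≠ i)
    (w₀ : ℂ) (hw₀ : w₀ ∈ ball (0:ℂ) 1)
    (hev : ∀ᶠ x in nhds w₀, F (γ x) = Projectivization.mk ℂ (Pi.single i 1) (single_ne i))
    (w₁ : ℂ) (hw₁ : w₁ ∈ ball (0:ℂ) 1) :
    F (γ w₁) = Projectivization.mk ℂ (Pi.single i 1) (single_ne i) := by
  set P := Projectivization.mk ℂ (Pi.single i (1:ℂ) : Fin 2 → ℂ) (single_ne i) with hP
  set S : Set ℂ := {w | w ∈ ball (0:ℂ) 1 ∧ ∀ᶠ x in nhds w, F (γ x) = P} with hS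
  have hSsub : S ⊆ ball (0:ℂ) 1 := fun w hw => hw.1
  -- Step A: every point of the disc in the closure of S has a ball inside S
  have stepA : ∀ z ∈ ball (0:ℂ) 1, z ∈ closure S → ∃ ε > 0, ball z ε ⊆ S := by
    intro z hz hzc
    obtain ⟨U, hUo, hzU, G, hGd, hFG⟩ := hF (γ z) (hmap z hz)
    obtain ⟨ε, hε, hball⟩ := Metric.isOpen_iff.1
      ((hUo.preimage hγ.continuous).inter isOpen_ball) z ⟨hzU, hz⟩
    have hsub : ∀ x ∈ ball z ε, γ x ∈ U ∩ bidisc := by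
      intro x hx
      obtain ⟨h1, h2⟩ := hball hx
      exact ⟨h1, hmap x h2⟩
    have hg : AnalyticOnNhd ℂ (fun w => G (γ w) j) (ball z ε) := by
      refine DifferentiableOn.analyticOnNhd ?_ isOpen_ball
      have hcomp : DifferentiableOn ℂ (G ∘ γ) (ball z ε) :=
        hGd.comp hγ.differentiableOn (fun x hx => hsub x hx)
      exact (differentiableOn_pi.1 hcomp) j
    obtain ⟨w, hwb, hwS⟩ : ∃ w, w ∈ ball z ε ∧ w ∈ S := by
      rcases mem_closure_iff.1 hzc (ball z ε) isOpen_ball (mem_ball_self hε) with ⟨w, hw1, hw2⟩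
      exact ⟨w, hw1, hw2⟩
    have hg0 : (fun w => G (γ w) j) =ᶠ[nhds w] 0 := by
      filter_upwards [hwS.2, isOpen_ball.mem_nhds hwb] with x hx hxb
      obtain ⟨hne, heq⟩ := hFG (γ x) (hsub x hxb)
      rw [heq] at hx
      exact (mk_eq_single_iff hne hij).1 hx
    have hEq0 := hg.eqOn_zero_of_preconnected_of_eventuallyEq_zero
      (convex_ball z ε).isPreconnected hwb hg0
    have hall : ∀ x ∈ ball z ε, F (γ x) = P := by
      intro x hx
      obtain ⟨hne, heq⟩ := hFG (γ x) (hsub x hx)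
      rw [heq, hP, mk_eq_single_iff hne hij]
      exact hEq0 hx
    refine ⟨ε, hε, fun x hx => ⟨(hball hx).2, ?_⟩⟩
    exact Filter.eventually_of_mem (isOpen_ball.mem_nhds hx) (fun y hy => hall y hy)
  have hSopen : IsOpen S := by
    rw [Metric.isOpen_iff]
    intro w hw
    exact stepA w hw.1 (subset_closure hw)
  have hw₀S : w₀ ∈ S := ⟨hw₀, hev⟩
  have hcl : ball (0:ℂ) 1 ⊆ closure S := by
    by_contra hcon
    obtain ⟨x, hxb, hxc⟩ := Set.not_subset.1 hcon
    have hpre := (convex_ball (0:ℂ) 1).isPreconnected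
    obtain ⟨y, hyb, hyS, hyc⟩ := hpre S (closure S)ᶜ hSopen isClosed_closure.isOpen_compl
      (fun t ht => (em (t ∈ closure S)).elim
        (fun h => Or.inl (by
          obtain ⟨ε, hε, hb⟩ := stepA t ht h
          exact hb (mem_ball_self hε)))
        Or.inr)
      ⟨w₀, hw₀, hw₀S⟩ ⟨x, hxb, hxc⟩
    exact hyc (subset_closure hyS)
  obtain ⟨ε, hε, hb⟩ := stepA w₁ hw₁ (hcl hw₁)
  exact (hb (mem_ball_self hε)).2.self_of_nhds

/-- The Riemann sphere `ℙ¹` is not 1-Hartogs: for `0 < r < 1/2` the holomorphic map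
`H₁¹(r) → ℙ¹`, `(z₁, z₂) ↦ [z₁ : z₂ - 1/2]` (well defined since `(0,1/2) ∉ H₁¹(r)`),
admits no extension to a map `F : Δ² → ℙ¹` which is holomorphic in the sense that it
locally lifts to nonvanishing holomorphic maps into `ℂ² \ {0}`. -/
theorem riemann_sphere_not_one_hartogs (r : ℝ) (hr0 : 0 < r) (hr12 : r < 1 / 2) :
    ¬ ∃ F : ℂ × ℂ → Projectivization ℂ (Fin 2 → ℂ),
      (∀ p ∈ bidisc, ∃ U : Set (ℂ × ℂ), IsOpen U ∧ p ∈ U ∧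
        ∃ G : ℂ × ℂ → Fin 2 → ℂ, DifferentiableOn ℂ G (U ∩ bidisc) ∧
          ∀ z ∈ U ∩ bidisc, ∃ h : G z ≠ 0, F z = Projectivization.mk ℂ (G z) h) ∧
      (∀ z ∈ hartogsFig r,
        ∀ h : (fun i : Fin 2 => if i = 0 then z.1 else z.2 - 1 / 2) ≠ 0,
          F z = Projectivization.mk ℂ (fun i : Fin 2 => if i = 0 then z.1 else z.2 - 1 / 2) h) := by
  rintro ⟨F, hF, hhart⟩
  have half_lt : ‖(1/2 : ℂ)‖ < 1 := by rw [norm_half]; norm_num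
  -- Slice 1 : w ↦ (w, 1/2), constant value [1 : 0]
  have h1 : F (0, 1/2) = Projectivization.mk ℂ (Pi.single 0 1) (single_ne 0) := by
    have := key F hF (fun w => (w, (1/2 : ℂ)))
      (differentiable_id.prodMk (differentiable_const _))
      (fun w hw => ⟨hw, by simpa [mem_ball_zero_iff] using half_lt⟩)
      0 1 (by decide)
      (((1 - r/2 : ℝ) : ℂ)) ?_ ?_ 0 (mem_ball_self one_pos)
    · exact this
    · rw [mem_ball_zero_iff, norm_ofReal', abs_of_pos (by linarith)]
      linarith
    · have hopen : IsOpen {x : ℂ | 1 - r < ‖x‖ ∧ ‖x‖ < 1} :=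
        (isOpen_lt continuous_const continuous_norm).inter
          (isOpen_lt continuous_norm continuous_const)
      have hmem : ((1 - r/2 : ℝ) : ℂ) ∈ {x : ℂ | 1 - r < ‖x‖ ∧ ‖x‖ < 1} := by
        constructor <;> (rw [norm_ofReal', abs_of_pos (by linarith : (0:ℝ) < 1 - r/2)]) <;> linarith
      filter_upwards [hopen.mem_nhds hmem] with x hx
      have hx0 : x ≠ 0 := by
        intro h
        rw [h, norm_zero] at hx
        linarith [hx.1]
      have hzmem : ((x, (1/2:ℂ)) : ℂ × ℂ) ∈ hartogsFig r := by
        right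
        refine ⟨⟨mem_ball_zero_iff.2 hx.2, ?_⟩, mem_ball_zero_iff.2 half_lt⟩
        rw [closure_ball (0:ℂ) (ne_of_gt (by linarith : (0:ℝ) < 1 - r))]
        intro hc
        rw [mem_closedBall_zero_iff] at hc
        linarith [hx.1]
      have hne : (fun i : Fin 2 => if i = 0 then ((x, (1/2:ℂ)) : ℂ × ℂ).1
          else ((x, (1/2:ℂ)) : ℂ × ℂ).2 - 1/2) ≠ 0 := by
        intro hc
        exact hx0 (by simpa using congrFun hc 0)
      have := hhart (x, (1/2:ℂ)) hzmem hne
      rw [this, mk_eq_single_iff hne (by decide : (1 : Fin 2) ≠ 0)]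
      norm_num
  -- Slice 2 : w ↦ (0, w), constant value [0 : 1]
  have h2 : F (0, 1/2) = Projectivization.mk ℂ (Pi.single 1 1) (single_ne 1) := by
    have := key F hF (fun w => ((0:ℂ), w))
      ((differentiable_const _).prodMk differentiable_id)
      (fun w hw => ⟨mem_ball_self one_pos, hw⟩)
      1 0 (by decide)
      0 (mem_ball_self one_pos) ?_ (1/2 : ℂ) (mem_ball_zero_iff.2 half_lt)
    · exact this
    · filter_upwards [isOpen_ball.mem_nhds (mem_ball_self hr0 : (0:ℂ) ∈ ball 0 r)] with x hx
      rw [mem_ball_zero_iff] at hx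
      have hx12 : x - 1/2 ≠ 0 := by
        intro h
        have : x = 1/2 := by linear_combination h
        rw [this, norm_half] at hx
        linarith
      have hzmem : (((0:ℂ), x) : ℂ × ℂ) ∈ hartogsFig r := by
        left
        exact ⟨mem_ball_self one_pos, mem_ball_zero_iff.2 hx⟩
      have hne : (fun i : Fin 2 => if i = 0 then (((0:ℂ), x) : ℂ × ℂ).1
          else (((0:ℂ), x) : ℂ × ℂ).2 - 1/2) ≠ 0 := by
        intro hc
        exact hx12 (by simpa using congrFun hc 1)
      have := hhart ((0:ℂ), x) hzmem hne
      rw [this, mk_eq_single_iff hne (by decide : (0 : Fin 2) ≠ 1)]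
      simp
  rw [h1] at h2
  rw [mk_eq_single_iff (single_ne 0) (by decide : (0 : Fin 2) ≠ 1)] at h2
  simp at h2
end
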